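/- Let l, r : [0,T]×ℝ → ℝ satisfy: continuity in t, strict monotonicity and bi-Lipschitz continuity in x with constants 0 < c < C, and inf_{t,x}(r(t,x) − l(t,x)) > 0. Let s ∈ C[0,T], let (x, K) solve the Skorokhod problem SP_l^r(s) with decomposition K = K^r − K^l, and let φ_t, ψ_t be the unique solutions of l(t, s_t + φ_t) = 0 and r(t, s_t + ψ_t) = 0 respectively. Then the total variation of K on [0,T] satisfies Var_0^T(K) = K^r_T + K^l_T ≤ Var_0^T(φ) + Var_0^T(ψ). -/

import Mathlib

open Set Filter Topology ENNReal

/-- A solution `(x, K)` (with Jordan decomposition `K = Kr - Kl`) of the Skorokhod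
problem `SP_l^r(s)` on `[0, T]` with two nonlinear time-dependent reflecting
constraints.  The flat-off conditions `∫ 1_{l(s,x_s)<0} dKl = ∫ 1_{r(s,x_s)>0} dKr = 0`
are expressed by requiring `Kl` (resp. `Kr`) to be constant on every subinterval where
the lower (resp. upper) constraint is strictly inactive. -/
structure SkorokhodSolution (T : ℝ) (l r : ℝ → ℝ → ℝ) (s : ℝ → ℝ)
    (x K Kr Kl : ℝ → ℝ) : Prop where
  cont_x : ContinuousOn x (Icc 0 T)
  eqn : ∀ t ∈ Icc (0 : ℝ) T, x t = s t + K t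
  lower : ∀ t ∈ Icc (0 : ℝ) T, l t (x t) ≤ 0
  upper : ∀ t ∈ Icc (0 : ℝ) T, 0 ≤ r t (x t)
  decomp : ∀ t ∈ Icc (0 : ℝ) T, K t = Kr t - Kl t
  Kr_zero : Kr 0 = 0
  Kl_zero : Kl 0 = 0
  cont_Kr : ContinuousOn Kr (Icc 0 T)
  cont_Kl : ContinuousOn Kl (Icc 0 T)
  mono_Kr : MonotoneOn Kr (Icc 0 T)
  mono_Kl : MonotoneOn Kl (Icc 0 T)
  flat_l : ∀ a b : ℝ, 0 ≤ a → a ≤ b → b ≤ T →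
    (∀ u ∈ Icc a b, l u (x u) < 0) → Kl b = Kl a
  flat_r : ∀ a b : ℝ, 0 ≤ a → a ≤ b → b ≤ T →
    (∀ u ∈ Icc a b, 0 < r u (x u)) → Kr b = Kr a

/-- Standing assumptions on the reflecting boundary functions `l ≤ r`:
continuity in `t`, strict monotonicity and bi-Lipschitz continuity in `x` with
constants `0 < c < C`, and uniform separation `inf (r - l) > 0`. -/
def LRAssumptions (T c C : ℝ) (l r : ℝ → ℝ → ℝ) : Prop :=
  (∀ x : ℝ, ContinuousOn (fun t => l t x) (Icc 0 T)) ∧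
  (∀ x : ℝ, ContinuousOn (fun t => r t x) (Icc 0 T)) ∧
  (∀ t ∈ Icc (0 : ℝ) T, StrictMono (l t)) ∧
  (∀ t ∈ Icc (0 : ℝ) T, StrictMono (r t)) ∧
  (∀ t ∈ Icc (0 : ℝ) T, ∀ x y : ℝ,
    c * |x - y| ≤ |l t x - l t y| ∧ |l t x - l t y| ≤ C * |x - y|) ∧
  (∀ t ∈ Icc (0 : ℝ) T, ∀ x y : ℝ,
    c * |x - y| ≤ |r t x - r t y| ∧ |r t x - r t y| ≤ C * |x - y|) ∧
  (∃ ε : ℝ, 0 < ε ∧ ∀ t ∈ Icc (0 : ℝ) T, ∀ x : ℝ, ε ≤ r t x - l t x)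

/-- Total variation estimate for the reflecting force of the Skorokhod problem:
with `φ_t, ψ_t` the unique solutions of `l(t, s_t + φ_t) = 0` and `r(t, s_t + ψ_t) = 0`,
one has `Var₀ᵀ(K) = Kr_T + Kl_T ≤ Var₀ᵀ(φ) + Var₀ᵀ(ψ)`. -/

private lemma flat_left (F : ℝ → ℝ) {a b : ℝ} (hab : a < b)
    (hc : ContinuousWithinAt F (Icc a b) b)
    (hflat : ∀ u ∈ Ico a b, F u = F a) : F b = F a := by
  have hne : (𝓝[Ico a b] b).NeBot := by
    rw [← mem_closure_iff_nhdsWithin_neBot, closure_Ico hab.ne]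
    exact right_mem_Icc.2 hab.le
  have h1 : Filter.Tendsto F (𝓝[Ico a b] b) (𝓝 (F b)) :=
    hc.tendsto.mono_left (nhdsWithin_mono _ Ico_subset_Icc_self)
  have h2 : Filter.Tendsto F (𝓝[Ico a b] b) (𝓝 (F a)) :=
    Filter.Tendsto.congr' (eventually_mem_nhdsWithin.mono fun u hu => (hflat u hu).symm)
      tendsto_const_nhds
  exact tendsto_nhds_unique h1 h2

private lemma flat_right (F : ℝ → ℝ) {a b : ℝ} (hab : a < b)
    (hc : ContinuousWithinAt F (Icc a b) a)
    (hflat : ∀ u ∈ Ioc a b, F u = F b) : F a = F b := by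
  have hne : (𝓝[Ioc a b] a).NeBot := by
    rw [← mem_closure_iff_nhdsWithin_neBot, closure_Ioc hab.ne]
    exact left_mem_Icc.2 hab.le
  have h1 : Filter.Tendsto F (𝓝[Ioc a b] a) (𝓝 (F a)) :=
    hc.tendsto.mono_left (nhdsWithin_mono _ Ioc_subset_Icc_self)
  have h2 : Filter.Tendsto F (𝓝[Ioc a b] a) (𝓝 (F b)) :=
    Filter.Tendsto.congr' (eventually_mem_nhdsWithin.mono fun u hu => (hflat u hu).symm)
      tendsto_const_nhds
  exact tendsto_nhds_unique h1 h2


private lemma key_interval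
    (T : ℝ) (l r : ℝ → ℝ → ℝ) (s : ℝ → ℝ) (x K Kr Kl : ℝ → ℝ)
    (hsol : SkorokhodSolution T l r s x K Kr Kl)
    (φ ψ : ℝ → ℝ) (δ : ℝ)
    (hlm : ∀ t ∈ Icc (0 : ℝ) T, StrictMono (l t))
    (hrm : ∀ t ∈ Icc (0 : ℝ) T, StrictMono (r t))
    (hφ : ∀ t ∈ Icc (0 : ℝ) T, l t (s t + φ t) = 0)
    (hψ : ∀ t ∈ Icc (0 : ℝ) T, r t (s t + ψ t) = 0)
    (contg : ContinuousOn (fun t => l t (x t)) (Icc 0 T))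
    (conth : ContinuousOn (fun t => r t (x t)) (Icc 0 T))
    (sep : ∀ u ∈ Icc (0 : ℝ) T, ∀ v ∈ Icc (0 : ℝ) T,
      l u (x u) = 0 → r v (x v) = 0 → δ ≤ |u - v|)
    (p q : ℝ) (hp : 0 ≤ p) (hpq : p ≤ q) (hq : q ≤ T) (hmesh : q - p < δ) :
    (|K q - K p| = (Kr q - Kr p) + (Kl q - Kl p)) ∧
    (∃ a b : ℝ, p ≤ a ∧ a ≤ b ∧ b ≤ q ∧ Kl q - Kl p ≤ |φ b - φ a|) ∧
    (∃ a b : ℝ, p ≤ a ∧ a ≤ b ∧ b ≤ q ∧ Kr q - Kr p ≤ |ψ b - ψ a|) := by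
  have hsub : Icc p q ⊆ Icc (0 : ℝ) T := Icc_subset_Icc hp hq
  have hpT : p ∈ Icc (0 : ℝ) T := ⟨hp, hpq.trans hq⟩
  have hqT : q ∈ Icc (0 : ℝ) T := ⟨hp.trans hpq, hq⟩
  have Kφ : ∀ t ∈ Icc (0 : ℝ) T, l t (x t) = 0 → K t = φ t := by
    intro t ht h0
    rw [hsol.eqn t ht] at h0
    have := (hlm t ht).injective (h0.trans (hφ t ht).symm)
    linarith
  have Kψ : ∀ t ∈ Icc (0 : ℝ) T, r t (x t) = 0 → K t = ψ t := by
    intro t ht h0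
    rw [hsol.eqn t ht] at h0
    have := (hrm t ht).injective (h0.trans (hψ t ht).symm)
    linarith
  have flatL : ∀ a b : ℝ, 0 ≤ a → a ≤ b → b ≤ T →
      (∀ u ∈ Ico a b, l u (x u) < 0) → Kl b = Kl a := by
    intro a b ha hab hb hneg
    rcases eq_or_lt_of_le hab with rfl | hab'
    · rfl
    refine flat_left Kl hab' ((hsol.cont_Kl b ⟨ha.trans hab, hb⟩).mono (Icc_subset_Icc ha hb)) ?_
    intro u hu
    exact hsol.flat_l a u ha hu.1 (hu.2.le.trans hb)
      (fun v hv => hneg v ⟨hv.1, lt_of_le_of_lt hv.2 hu.2⟩)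
  have flatL' : ∀ a b : ℝ, 0 ≤ a → a ≤ b → b ≤ T →
      (∀ u ∈ Ioc a b, l u (x u) < 0) → Kl b = Kl a := by
    intro a b ha hab hb hneg
    rcases eq_or_lt_of_le hab with rfl | hab'
    · rfl
    refine (flat_right Kl hab'
      ((hsol.cont_Kl a ⟨ha, hab.trans hb⟩).mono (Icc_subset_Icc ha hb)) ?_).symm
    intro u hu
    exact (hsol.flat_l u b (ha.trans hu.1.le) hu.2 hb
      (fun v hv => hneg v ⟨lt_of_lt_of_le hu.1 hv.1, hv.2⟩)).symm
  have flatR : ∀ a b : ℝ, 0 ≤ a → a ≤ b → b ≤ T →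
      (∀ u ∈ Ico a b, 0 < r u (x u)) → Kr b = Kr a := by
    intro a b ha hab hb hpos
    rcases eq_or_lt_of_le hab with rfl | hab'
    · rfl
    refine flat_left Kr hab' ((hsol.cont_Kr b ⟨ha.trans hab, hb⟩).mono (Icc_subset_Icc ha hb)) ?_
    intro u hu
    exact hsol.flat_r a u ha hu.1 (hu.2.le.trans hb)
      (fun v hv => hpos v ⟨hv.1, lt_of_le_of_lt hv.2 hu.2⟩)
  have flatR' : ∀ a b : ℝ, 0 ≤ a → a ≤ b → b ≤ T →
      (∀ u ∈ Ioc a b, 0 < r u (x u)) → Kr b = Kr a := by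
    intro a b ha hab hb hpos
    rcases eq_or_lt_of_le hab with rfl | hab'
    · rfl
    refine (flat_right Kr hab'
      ((hsol.cont_Kr a ⟨ha, hab.trans hb⟩).mono (Icc_subset_Icc ha hb)) ?_).symm
    intro u hu
    exact (hsol.flat_r u b (ha.trans hu.1.le) hu.2 hb
      (fun v hv => hpos v ⟨lt_of_lt_of_le hu.1 hv.1, hv.2⟩)).symm
  by_cases hA : ∃ w ∈ Icc p q, l w (x w) = 0
  · obtain ⟨w, hw, hw0⟩ := hA
    have hBpos : ∀ u ∈ Icc p q, 0 < r u (x u) := by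
      intro u hu
      rcases (hsol.upper u (hsub hu)).lt_or_eq with h | h
      · exact h
      · exfalso
        have hsep' := sep w (hsub hw) u (hsub hu) hw0 h.symm
        have : |w - u| ≤ q - p :=
          abs_sub_le_iff.2 ⟨by linarith [hw.1, hw.2, hu.1, hu.2],
            by linarith [hw.1, hw.2, hu.1, hu.2]⟩
        linarith
    have hKrpq : Kr q = Kr p := hsol.flat_r p q hp hpq hq hBpos
    set S : Set ℝ := Icc p q ∩ (fun u => l u (x u)) ⁻¹' {0} with hSdef
    have hSne : S.Nonempty := ⟨w, hw, hw0⟩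
    have hSclosed : IsClosed S :=
      (contg.mono hsub).preimage_isClosed_of_isClosed isClosed_Icc isClosed_singleton
    have hbdd : BddBelow S := ⟨p, fun y hy => hy.1.1⟩
    have hbdd' : BddAbove S := ⟨q, fun y hy => hy.1.2⟩
    set a := sInf S with hadef
    set b := sSup S with hbdef
    have haS : a ∈ S := hSclosed.csInf_mem hSne hbdd
    have hbS : b ∈ S := hSclosed.csSup_mem hSne hbdd'
    have hab : a ≤ b := csInf_le_csSup hSne hbdd hbdd'
    have haT : a ∈ Icc (0 : ℝ) T := hsub haS.1
    have hbT : b ∈ Icc (0 : ℝ) T := hsub hbS.1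
    have hKla : Kl a = Kl p := by
      refine flatL p a hp haS.1.1 haT.2 ?_
      intro u hu
      have huT : u ∈ Icc (0 : ℝ) T := ⟨hp.trans hu.1, (hu.2.le.trans haS.1.2).trans hq⟩
      refine lt_of_le_of_ne (hsol.lower u huT) ?_
      intro h0
      exact absurd (csInf_le hbdd ⟨⟨hu.1, hu.2.le.trans haS.1.2⟩, h0⟩) (not_le.2 hu.2)
    have hKlb : Kl q = Kl b := by
      refine flatL' b q hbT.1 hbS.1.2 hq ?_
      intro u hu
      have huT : u ∈ Icc (0 : ℝ) T := ⟨hbT.1.trans hu.1.le, hu.2.trans hq⟩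
      refine lt_of_le_of_ne (hsol.lower u huT) ?_
      intro h0
      exact absurd (le_csSup hbdd' ⟨⟨hbS.1.1.trans hu.1.le, hu.2⟩, h0⟩) (not_le.2 hu.1)
    have hKr_const : ∀ t ∈ Icc p q, Kr t = Kr p := by
      intro t ht
      have h1 := hsol.mono_Kr hpT (hsub ht) ht.1
      have h2 := hsol.mono_Kr (hsub ht) hqT ht.2
      linarith [hKrpq]
    have hKa : K a = φ a := Kφ a haT haS.2
    have hKb : K b = φ b := Kφ b hbT hbS.2
    have hda := hsol.decomp a haT
    have hdb := hsol.decomp b hbT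
    have hdp := hsol.decomp p hpT
    have hdq := hsol.decomp q hqT
    have hKra : Kr a = Kr p := hKr_const a haS.1
    have hKrb : Kr b = Kr p := hKr_const b hbS.1
    have hKl_eq : Kl q - Kl p = φ a - φ b := by
      have h1 : K a - K b = Kl b - Kl a := by rw [hda, hdb, hKra, hKrb]; ring
      rw [hKlb, ← hKla, ← hKa, ← hKb]; linarith
    have hKlmono : Kl p ≤ Kl q := hsol.mono_Kl hpT hqT hpq
    refine ⟨?_, ⟨a, b, haS.1.1, hab, hbS.1.2, ?_⟩, ⟨p, p, le_refl p, le_refl p, hpq, ?_⟩⟩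
    · have hKdiff : K q - K p = -(Kl q - Kl p) := by rw [hdp, hdq, hKrpq]; ring
      rw [hKdiff, abs_neg, abs_of_nonneg (by linarith), hKrpq]; ring
    · rw [hKl_eq, abs_sub_comm]; exact le_abs_self _
    · rw [hKrpq]; simp
  · have hAneg : ∀ u ∈ Icc p q, l u (x u) < 0 := fun u hu =>
      lt_of_le_of_ne (hsol.lower u (hsub hu)) (fun h0 => hA ⟨u, hu, h0⟩)
    have hKlpq : Kl q = Kl p := hsol.flat_l p q hp hpq hq hAneg
    by_cases hB : ∃ w ∈ Icc p q, r w (x w) = 0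
    · obtain ⟨w, hw, hw0⟩ := hB
      set S : Set ℝ := Icc p q ∩ (fun u => r u (x u)) ⁻¹' {0} with hSdef
      have hSne : S.Nonempty := ⟨w, hw, hw0⟩
      have hSclosed : IsClosed S :=
        (conth.mono hsub).preimage_isClosed_of_isClosed isClosed_Icc isClosed_singleton
      have hbdd : BddBelow S := ⟨p, fun y hy => hy.1.1⟩
      have hbdd' : BddAbove S := ⟨q, fun y hy => hy.1.2⟩
      set a := sInf S with hadef
      set b := sSup S with hbdef
      have haS : a ∈ S := hSclosed.csInf_mem hSne hbdd
      have hbS : b ∈ S := hSclosed.csSup_mem hSne hbdd'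
      have hab : a ≤ b := csInf_le_csSup hSne hbdd hbdd'
      have haT : a ∈ Icc (0 : ℝ) T := hsub haS.1
      have hbT : b ∈ Icc (0 : ℝ) T := hsub hbS.1
      have hKra : Kr a = Kr p := by
        refine flatR p a hp haS.1.1 haT.2 ?_
        intro u hu
        have huT : u ∈ Icc (0 : ℝ) T := ⟨hp.trans hu.1, (hu.2.le.trans haS.1.2).trans hq⟩
        refine lt_of_le_of_ne (hsol.upper u huT) ?_
        intro h0
        exact absurd (csInf_le hbdd ⟨⟨hu.1, hu.2.le.trans haS.1.2⟩, h0.symm⟩) (not_le.2 hu.2)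
      have hKrb : Kr q = Kr b := by
        refine flatR' b q hbT.1 hbS.1.2 hq ?_
        intro u hu
        have huT : u ∈ Icc (0 : ℝ) T := ⟨hbT.1.trans hu.1.le, hu.2.trans hq⟩
        refine lt_of_le_of_ne (hsol.upper u huT) ?_
        intro h0
        exact absurd (le_csSup hbdd' ⟨⟨hbS.1.1.trans hu.1.le, hu.2⟩, h0.symm⟩) (not_le.2 hu.1)
      have hKl_const : ∀ t ∈ Icc p q, Kl t = Kl p := by
        intro t ht
        have h1 := hsol.mono_Kl hpT (hsub ht) ht.1
        have h2 := hsol.mono_Kl (hsub ht) hqT ht.2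
        linarith [hKlpq]
      have hKa : K a = ψ a := Kψ a haT haS.2
      have hKb : K b = ψ b := Kψ b hbT hbS.2
      have hda := hsol.decomp a haT
      have hdb := hsol.decomp b hbT
      have hdp := hsol.decomp p hpT
      have hdq := hsol.decomp q hqT
      have hKla : Kl a = Kl p := hKl_const a haS.1
      have hKlb : Kl b = Kl p := hKl_const b hbS.1
      have hKr_eq : Kr q - Kr p = ψ b - ψ a := by
        have h1 : K b - K a = Kr b - Kr a := by rw [hda, hdb, hKla, hKlb]; ring
        rw [hKrb, ← hKra, ← hKa, ← hKb]; linarith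
      have hKrmono : Kr p ≤ Kr q := hsol.mono_Kr hpT hqT hpq
      refine ⟨?_, ⟨p, p, le_refl p, le_refl p, hpq, ?_⟩, ⟨a, b, haS.1.1, hab, hbS.1.2, ?_⟩⟩
      · have hKdiff : K q - K p = Kr q - Kr p := by rw [hdp, hdq, hKlpq]; ring
        rw [hKdiff, abs_of_nonneg (by linarith), hKlpq]; ring
      · rw [hKlpq]; simp
      · rw [hKr_eq]; exact le_abs_self _
    · have hBpos : ∀ u ∈ Icc p q, 0 < r u (x u) := fun u hu =>
        lt_of_le_of_ne (hsol.upper u (hsub hu)) (fun h0 => hB ⟨u, hu, h0.symm⟩)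
      have hKrpq : Kr q = Kr p := hsol.flat_r p q hp hpq hq hBpos
      refine ⟨?_, ⟨p, p, le_refl p, le_refl p, hpq, ?_⟩, ⟨p, p, le_refl p, le_refl p, hpq, ?_⟩⟩
      · rw [hsol.decomp p hpT, hsol.decomp q hqT, hKrpq, hKlpq]; simp
      · rw [hKlpq]; simp
      · rw [hKrpq]; simp

/-- Every other term of a sum bounds below. -/
private lemma sum_even_le (f : ℕ → ℝ≥0∞) (N : ℕ) :
    ∑ m ∈ Finset.range N, f (2 * m) ≤ ∑ j ∈ Finset.range (2 * N), f j := by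
  induction N with
  | zero => simp
  | succ N ih =>
    rw [Finset.sum_range_succ, show 2 * (N + 1) = (2 * N + 1) + 1 by ring,
      Finset.sum_range_succ, Finset.sum_range_succ]
    exact le_trans (add_le_add_left ih _) le_self_add

/-- Key combinatorial lemma: if the increments of a nondecreasing function `F`
along a partition `u` are each bounded by an oscillation of `G` inside the
corresponding subinterval, then `F (u n) - F (u 0)` is bounded by the variation
of `G`. -/
private lemma aux_var (G F : ℝ → ℝ) (S : Set ℝ) (n : ℕ) (u : ℕ → ℝ)
    (humono : Monotone u) (_humem : ∀ i, u i ∈ S)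
    (hF : ∀ i, 0 ≤ F (u (i + 1)) - F (u i))
    (hex : ∀ i, ∃ a b : ℝ, u i ≤ a ∧ a ≤ b ∧ b ≤ u (i + 1) ∧ a ∈ S ∧ b ∈ S ∧
      F (u (i + 1)) - F (u i) ≤ |G b - G a|) :
    ENNReal.ofReal (F (u n) - F (u 0)) ≤ eVariationOn G S := by
  choose a b ha hab hb haS hbS hbound using hex
  set v : ℕ → ℝ := fun j => if j % 2 = 0 then a (j / 2) else b (j / 2) with hv
  have hv2 : ∀ m, v (2 * m) = a m := by
    intro m; simp only [hv]; rw [if_pos (by omega)]; congr 1; omega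
  have hv21 : ∀ m, v (2 * m + 1) = b m := by
    intro m; simp only [hv]; rw [if_neg (by omega)]; congr 1; omega
  have hvmono : Monotone v := by
    apply monotone_nat_of_le_succ
    intro j
    rcases Nat.even_or_odd j with ⟨m, rfl⟩ | ⟨m, rfl⟩
    · rw [show m + m = 2 * m by ring, hv2, show 2 * m + 1 = 2 * m + 1 from rfl, hv21]
      exact hab m
    · rw [show 2 * m + 1 + 1 = 2 * (m + 1) by ring, hv21, hv2]
      exact le_trans (hb m) (ha (m + 1))
  have hvmem : ∀ j, v j ∈ S := by
    intro j
    rcases Nat.even_or_odd j with ⟨m, rfl⟩ | ⟨m, rfl⟩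
    · rw [show m + m = 2 * m by ring, hv2]; exact haS m
    · rw [hv21]; exact hbS m
  have hsum := eVariationOn.sum_le (f := G) (n := 2 * n) hvmono hvmem
  refine le_trans ?_ hsum
  have htel : F (u n) - F (u 0) = ∑ m ∈ Finset.range n, (F (u (m + 1)) - F (u m)) :=
    (Finset.sum_range_sub (fun m => F (u m)) n).symm
  rw [htel, ENNReal.ofReal_sum_of_nonneg (fun i _ => hF i)]
  refine le_trans ?_ (sum_even_le (fun j => edist (G (v (j + 1))) (G (v j))) n)
  apply Finset.sum_le_sum
  intro m _
  rw [show 2 * m + 1 = 2 * m + 1 from rfl, hv21, hv2, edist_dist, Real.dist_eq]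
  exact ENNReal.ofReal_le_ofReal (hbound m)


private lemma cont_comp (T C : ℝ) (hC : 0 < C) (l : ℝ → ℝ → ℝ) (x : ℝ → ℝ)
    (hlc : ∀ y : ℝ, ContinuousOn (fun t => l t y) (Icc 0 T))
    (hlL : ∀ t ∈ Icc (0 : ℝ) T, ∀ y z : ℝ, |l t y - l t z| ≤ C * |y - z|)
    (hx : ContinuousOn x (Icc 0 T)) :
    ContinuousOn (fun t => l t (x t)) (Icc 0 T) := by
  intro u hu
  rw [Metric.continuousWithinAt_iff]
  intro ε' hε'
  have h1 := hlc (x u) u hu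
  rw [Metric.continuousWithinAt_iff] at h1
  obtain ⟨δ1, hδ1, H1⟩ := h1 (ε' / 2) (by positivity)
  have h2 := hx u hu
  rw [Metric.continuousWithinAt_iff] at h2
  obtain ⟨δ2, hδ2, H2⟩ := h2 (ε' / (2 * C)) (by positivity)
  refine ⟨min δ1 δ2, lt_min hδ1 hδ2, fun t ht hdt => ?_⟩
  have e1 := H1 ht (lt_of_lt_of_le hdt (min_le_left _ _))
  have e2 := H2 ht (lt_of_lt_of_le hdt (min_le_right _ _))
  have lip := hlL t ht (x t) (x u)
  rw [Real.dist_eq] at e1 e2 ⊢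
  calc |l t (x t) - l u (x u)|
      ≤ |l t (x t) - l t (x u)| + |l t (x u) - l u (x u)| := abs_sub_le _ _ _
    _ ≤ C * |x t - x u| + ε' / 2 := add_le_add lip e1.le
    _ < C * (ε' / (2 * C)) + ε' / 2 := add_lt_add_left (mul_lt_mul_of_pos_left e2 hC) _
    _ = ε' := by field_simp; ring


theorem stmt_5 (T c C : ℝ) (hT : 0 ≤ T) (hc : 0 < c) (hcC : c < C)
    (l r : ℝ → ℝ → ℝ) (s : ℝ → ℝ) (hs : ContinuousOn s (Icc 0 T))
    (hlr : LRAssumptions T c C l r)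
    (x K Kr Kl : ℝ → ℝ)
    (hsol : SkorokhodSolution T l r s x K Kr Kl)
    (φ ψ : ℝ → ℝ)
    (hφ : ∀ t ∈ Icc (0 : ℝ) T, l t (s t + φ t) = 0)
    (hψ : ∀ t ∈ Icc (0 : ℝ) T, r t (s t + ψ t) = 0) :
    eVariationOn K (Icc 0 T) = ENNReal.ofReal (Kr T + Kl T) ∧
    eVariationOn K (Icc 0 T) ≤ eVariationOn φ (Icc 0 T) + eVariationOn ψ (Icc 0 T) := by
  obtain ⟨hlc, hrc, hlm, hrm, hlL, hrL, ε, εpos, hsep⟩ := hlr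
  have hC : (0 : ℝ) < C := hc.trans hcC
  have h0T : (0 : ℝ) ∈ Icc (0 : ℝ) T := ⟨le_refl 0, hT⟩
  have hTT : T ∈ Icc (0 : ℝ) T := ⟨hT, le_refl T⟩
  have contg : ContinuousOn (fun t => l t (x t)) (Icc 0 T) :=
    cont_comp T C hC l x hlc (fun t ht y z => (hlL t ht y z).2) hsol.cont_x
  have conth : ContinuousOn (fun t => r t (x t)) (Icc 0 T) :=
    cont_comp T C hC r x hrc (fun t ht y z => (hrL t ht y z).2) hsol.cont_x
  have huc := isCompact_Icc.uniformContinuousOn_of_continuous conth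
  rw [Metric.uniformContinuousOn_iff] at huc
  obtain ⟨δ, δpos, hδ⟩ := huc ε εpos
  have sep : ∀ u ∈ Icc (0 : ℝ) T, ∀ v ∈ Icc (0 : ℝ) T,
      l u (x u) = 0 → r v (x v) = 0 → δ ≤ |u - v| := by
    intro u hu v hv hgu hhv
    by_contra hlt
    push_neg at hlt
    have h1 := hδ u hu v hv (by rw [Real.dist_eq]; exact hlt)
    rw [Real.dist_eq, hhv, sub_zero, abs_of_nonneg (hsol.upper u hu)] at h1
    have h2 := hsep u hu (x u)
    rw [hgu, sub_zero] at h2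
    linarith
  obtain ⟨n0, hn0⟩ := exists_nat_gt (T / δ)
  set n : ℕ := n0 + 1 with hndef
  have hnpos : (0 : ℝ) < (n : ℝ) := by exact_mod_cast Nat.succ_pos n0
  set d : ℝ := T / n with hddef
  have hd0 : 0 ≤ d := div_nonneg hT hnpos.le
  have hdδ : d < δ := by
    rw [hddef, div_lt_iff₀ hnpos]
    have h1 : T < n0 * δ := (div_lt_iff₀ δpos).1 hn0
    have h2 : (n0 : ℝ) ≤ (n : ℝ) := by exact_mod_cast Nat.le_succ n0
    nlinarith
  set u : ℕ → ℝ := fun i => min ((i : ℝ) * d) T with hudef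
  have humono : Monotone u := fun i j hij =>
    min_le_min (mul_le_mul_of_nonneg_right (by exact_mod_cast hij) hd0) le_rfl
  have humem : ∀ i, u i ∈ Icc (0 : ℝ) T := fun i =>
    ⟨le_min (mul_nonneg (Nat.cast_nonneg i) hd0) hT, min_le_right _ _⟩
  have hu0 : u 0 = 0 := by simp [hudef, hT]
  have hun : u n = T := by
    have hnd : (n : ℝ) * d = T := by
      rw [hddef]; field_simp
    simp [hudef, hnd]
  have hstep : ∀ i : ℕ, u (i + 1) - u i < δ := by
    intro i
    have h1 : u (i + 1) ≤ u i + d := by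
      have e : ((i + 1 : ℕ) : ℝ) * d = (i : ℝ) * d + d := by push_cast; ring
      calc u (i + 1) = min ((i : ℝ) * d + d) T := by rw [hudef]; simp only; rw [e]
        _ ≤ min ((i : ℝ) * d + d) (T + d) := min_le_min le_rfl (by linarith)
        _ = min ((i : ℝ) * d) T + d := min_add_add_right _ _ _
        _ = u i + d := rfl
    linarith
  have keyi := fun i : ℕ =>
    key_interval T l r s x K Kr Kl hsol φ ψ δ hlm hrm hφ hψ contg conth sep
      (u i) (u (i + 1)) (humem i).1 (humono (Nat.le_succ i)) (humem (i + 1)).2 (hstep i)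
  have hKrT0 : 0 ≤ Kr T := by
    have := hsol.mono_Kr h0T hTT hT
    have h0 := hsol.Kr_zero
    linarith
  have hKlT0 : 0 ≤ Kl T := by
    have := hsol.mono_Kl h0T hTT hT
    have h0 := hsol.Kl_zero
    linarith
  have hsum_eq : ∑ i ∈ Finset.range n, |K (u (i + 1)) - K (u i)| = Kr T + Kl T := by
    rw [Finset.sum_congr rfl (fun i _ => (keyi i).1), Finset.sum_add_distrib,
      Finset.sum_range_sub (fun i => Kr (u i)), Finset.sum_range_sub (fun i => Kl (u i)),
      hu0, hun, hsol.Kr_zero, hsol.Kl_zero]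
    ring
  have lb : ENNReal.ofReal (Kr T + Kl T) ≤ eVariationOn K (Icc 0 T) := by
    calc ENNReal.ofReal (Kr T + Kl T)
        = ∑ i ∈ Finset.range n, ENNReal.ofReal |K (u (i + 1)) - K (u i)| := by
          rw [← hsum_eq, ENNReal.ofReal_sum_of_nonneg (fun i _ => abs_nonneg _)]
      _ = ∑ i ∈ Finset.range n, edist (K (u (i + 1))) (K (u i)) :=
          Finset.sum_congr rfl (fun i _ => by rw [edist_dist, Real.dist_eq])
      _ ≤ eVariationOn K (Icc 0 T) := eVariationOn.sum_le (f := K) (n := n) humono humem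
  have ub : eVariationOn K (Icc 0 T) ≤ ENNReal.ofReal (Kr T + Kl T) := by
    rw [eVariationOn]
    refine iSup_le ?_
    rintro ⟨m, v, hvmono, hvmem⟩
    simp only
    have hterm : ∀ i ∈ Finset.range m, edist (K (v (i + 1))) (K (v i)) ≤
        ENNReal.ofReal ((Kr (v (i + 1)) - Kr (v i)) + (Kl (v (i + 1)) - Kl (v i))) := by
      intro i _
      rw [edist_dist, Real.dist_eq]
      apply ENNReal.ofReal_le_ofReal
      rw [hsol.decomp _ (hvmem (i + 1)), hsol.decomp _ (hvmem i)]
      have h1 := hsol.mono_Kr (hvmem i) (hvmem (i + 1)) (hvmono (Nat.le_succ i))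
      have h2 := hsol.mono_Kl (hvmem i) (hvmem (i + 1)) (hvmono (Nat.le_succ i))
      exact abs_le.mpr ⟨by linarith, by linarith⟩
    calc ∑ i ∈ Finset.range m, edist (K (v (i + 1))) (K (v i))
        ≤ ∑ i ∈ Finset.range m,
            ENNReal.ofReal ((Kr (v (i + 1)) - Kr (v i)) + (Kl (v (i + 1)) - Kl (v i))) :=
          Finset.sum_le_sum hterm
      _ = ENNReal.ofReal (∑ i ∈ Finset.range m,
            ((Kr (v (i + 1)) - Kr (v i)) + (Kl (v (i + 1)) - Kl (v i)))) := by
          rw [ENNReal.ofReal_sum_of_nonneg]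
          intro i _
          have h1 := hsol.mono_Kr (hvmem i) (hvmem (i + 1)) (hvmono (Nat.le_succ i))
          have h2 := hsol.mono_Kl (hvmem i) (hvmem (i + 1)) (hvmono (Nat.le_succ i))
          linarith
      _ ≤ ENNReal.ofReal (Kr T + Kl T) := by
          apply ENNReal.ofReal_le_ofReal
          rw [Finset.sum_add_distrib, Finset.sum_range_sub (fun i => Kr (v i)),
            Finset.sum_range_sub (fun i => Kl (v i))]
          have e1 := hsol.mono_Kr (hvmem m) hTT (hvmem m).2
          have e2 := hsol.mono_Kl (hvmem m) hTT (hvmem m).2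
          have e3 := hsol.mono_Kr h0T (hvmem 0) (hvmem 0).1
          have e4 := hsol.mono_Kl h0T (hvmem 0) (hvmem 0).1
          have e5 := hsol.Kr_zero
          have e6 := hsol.Kl_zero
          linarith
  have heq : eVariationOn K (Icc 0 T) = ENNReal.ofReal (Kr T + Kl T) := le_antisymm ub lb
  have hexφ : ∀ i : ℕ, ∃ a b : ℝ, u i ≤ a ∧ a ≤ b ∧ b ≤ u (i + 1) ∧
      a ∈ Icc (0 : ℝ) T ∧ b ∈ Icc (0 : ℝ) T ∧
      Kl (u (i + 1)) - Kl (u i) ≤ |φ b - φ a| := by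
    intro i
    obtain ⟨a, b, h1, h2, h3, h4⟩ := (keyi i).2.1
    exact ⟨a, b, h1, h2, h3, ⟨(humem i).1.trans h1, (h2.trans h3).trans (humem (i + 1)).2⟩,
      ⟨(humem i).1.trans (h1.trans h2), h3.trans (humem (i + 1)).2⟩, h4⟩
  have hexψ : ∀ i : ℕ, ∃ a b : ℝ, u i ≤ a ∧ a ≤ b ∧ b ≤ u (i + 1) ∧
      a ∈ Icc (0 : ℝ) T ∧ b ∈ Icc (0 : ℝ) T ∧
      Kr (u (i + 1)) - Kr (u i) ≤ |ψ b - ψ a| := by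
    intro i
    obtain ⟨a, b, h1, h2, h3, h4⟩ := (keyi i).2.2
    exact ⟨a, b, h1, h2, h3, ⟨(humem i).1.trans h1, (h2.trans h3).trans (humem (i + 1)).2⟩,
      ⟨(humem i).1.trans (h1.trans h2), h3.trans (humem (i + 1)).2⟩, h4⟩
  have hKl_var : ENNReal.ofReal (Kl T) ≤ eVariationOn φ (Icc 0 T) := by
    have h := aux_var φ Kl (Icc 0 T) n u humono humem
      (fun i => sub_nonneg.2 (hsol.mono_Kl (humem i) (humem (i + 1)) (humono (Nat.le_succ i))))
      hexφ
    rwa [hun, hu0, hsol.Kl_zero, sub_zero] at h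
  have hKr_var : ENNReal.ofReal (Kr T) ≤ eVariationOn ψ (Icc 0 T) := by
    have h := aux_var ψ Kr (Icc 0 T) n u humono humem
      (fun i => sub_nonneg.2 (hsol.mono_Kr (humem i) (humem (i + 1)) (humono (Nat.le_succ i))))
      hexψ
    rwa [hun, hu0, hsol.Kr_zero, sub_zero] at h
  refine ⟨heq, ?_⟩
  rw [heq, ENNReal.ofReal_add hKrT0 hKlT0]
  calc ENNReal.ofReal (Kr T) + ENNReal.ofReal (Kl T)
      ≤ eVariationOn ψ (Icc 0 T) + eVariationOn φ (Icc 0 T) := add_le_add hKr_var hKl_var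
    _ = eVariationOn φ (Icc 0 T) + eVariationOn ψ (Icc 0 T) := add_comm _ _
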